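/- Let M ∈ ℕ and define the (M+1)×(M+1) matrix B over ℚ with rows and columns indexed by 0,…,M by B_{j,p} = 2^{2j+1−p}·C(M, 2j−p), where C(M,k) is the binomial coefficient, interpreted as 0 when 2j − p < 0 or 2j − p > M. Then B is invertible. -/
import Mathlib

open Polynomial

namespace Stmt14Aux

lemma coeff_comp_negX (p : ℚ[X]) (n : ℕ) :
    (p.comp (-X)).coeff n = (-1) ^ n * p.coeff n := by
  induction p using Polynomial.induction_on' with
  | add p q hp hq => simp [add_comp, hp, hq, mul_add]
  | monomial m a =>
      rw [← C_mul_X_pow_eq_monomial, mul_comp, pow_comp, C_comp, X_comp, neg_pow]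
      have h1 : (-1 : ℚ[X]) ^ m = C ((-1 : ℚ) ^ m) := by rw [map_pow, map_neg, map_one]
      rw [h1, ← mul_assoc, ← C_mul, coeff_C_mul, coeff_C_mul, coeff_X_pow]
      split_ifs with h
      · subst h; ring
      · ring

/-- The polynomial `2X + 1`. -/
noncomputable def Pm : ℚ[X] := C 2 * X + 1

/-- The polynomial `1 - 2X`. -/
noncomputable def Nm : ℚ[X] := 1 - C 2 * X

lemma Pm_eq : Pm = C 2 * (X + C (1/2)) := by
  unfold Pm
  rw [mul_add, ← C_mul]
  norm_num

lemma coeff_Pm_pow (m k : ℕ) :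
    (Pm ^ m).coeff k = 2 ^ k * (m.choose k : ℚ) := by
  rw [Pm_eq, mul_pow, ← map_pow, coeff_C_mul, coeff_X_add_C_pow]
  by_cases hk : k ≤ m
  · have h2 : (2:ℚ) ^ k * 2 ^ (m - k) = 2 ^ m := by
      rw [← pow_add, Nat.add_sub_cancel' hk]
    have : ((1:ℚ)/2) ^ (m - k) = (2 ^ (m-k))⁻¹ := by
      rw [one_div, inv_pow]
    rw [this]
    field_simp
    rw [← h2]; ring
  · rw [Nat.choose_eq_zero_of_lt (by omega)]
    simp

lemma natDegree_Pm : Pm.natDegree = 1 := by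
  have : Pm = C 2 * X + C 1 := by unfold Pm; simp
  rw [this, natDegree_linear (by norm_num)]

lemma Pm_ne_zero : Pm ≠ 0 := by
  intro h
  have := natDegree_Pm
  rw [h] at this
  simp at this

lemma Nm_ne_zero : Nm ≠ 0 := by
  intro h
  have : Nm.coeff 0 = 1 := by unfold Nm; simp
  rw [h] at this
  simp at this

lemma Pm_comp : Pm.comp (-X) = Nm := by
  unfold Pm Nm
  rw [add_comp, mul_comp, C_comp, X_comp, one_comp]
  ring

lemma Nm_comp : Nm.comp (-X) = Pm := by
  unfold Pm Nm
  rw [sub_comp, mul_comp, C_comp, X_comp, one_comp]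
  ring

lemma coprime_Pm_Nm : IsCoprime Pm Nm := by
  refine ⟨C (1/2), C (1/2), ?_⟩
  unfold Pm Nm
  rw [show C ((1:ℚ)/2) * (C 2 * X + 1) + C ((1:ℚ)/2) * (1 - C 2 * X)
      = C ((1:ℚ)/2) * 2 from by ring,
    show (2:ℚ[X]) = C (2:ℚ) from (map_ofNat C 2).symm, ← C_mul]
  norm_num

end Stmt14Aux

open Stmt14Aux in
theorem stmt_14 (M : ℕ) :
    IsUnit (Matrix.of (fun j p : Fin (M + 1) =>
      if (p : ℕ) ≤ 2 * (j : ℕ) then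
        ((2 ^ (2 * (j : ℕ) + 1 - (p : ℕ)) * Nat.choose M (2 * (j : ℕ) - (p : ℕ)) : ℕ) : ℚ)
      else 0)) := by
  rw [Matrix.isUnit_iff_isUnit_det, isUnit_iff_ne_zero]
  intro hdet
  obtain ⟨v, hv, hmul⟩ := Matrix.exists_mulVec_eq_zero_iff.mpr hdet
  apply hv
  -- the polynomial built from the kernel vector
  set f : ℚ[X] := ∑ p : Fin (M+1), C (v p) * X ^ (p : ℕ) with hf
  have hfcoeff : ∀ p : Fin (M+1), f.coeff (p : ℕ) = v p := by
    intro p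
    rw [hf, finset_sum_coeff]
    rw [Finset.sum_eq_single p]
    · simp
    · intro b _ hb
      rw [coeff_C_mul, coeff_X_pow, if_neg (fun h => hb (Fin.ext h.symm)), mul_zero]
    · simp
  have hfdeg : f.natDegree ≤ M := by
    apply natDegree_sum_le_of_forall_le
    intro i _
    exact le_trans (natDegree_C_mul_X_pow_le _ _) (by omega)
  -- rows of the matrix say: even coefficients of f * Pm^M vanish
  set g : ℚ[X] := f * Pm ^ M with hg
  have hgdeg : g.natDegree ≤ 2 * M := by
    refine le_trans (natDegree_mul_le) ?_
    have : (Pm ^ M).natDegree = M := by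
      rw [natDegree_pow, natDegree_Pm, mul_one]
    omega
  have hrow : ∀ j : Fin (M+1), g.coeff (2 * (j : ℕ)) = 0 := by
    intro j
    have h0 : ∀ j', (Matrix.of (fun j p : Fin (M + 1) =>
      if (p : ℕ) ≤ 2 * (j : ℕ) then
        ((2 ^ (2 * (j : ℕ) + 1 - (p : ℕ)) * Nat.choose M (2 * (j : ℕ) - (p : ℕ)) : ℕ) : ℚ)
      else 0)).mulVec v j' = 0 := fun j' => congrFun hmul j'
    have h1 := h0 j
    simp only [Matrix.mulVec, dotProduct, Matrix.of_apply] at h1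
    have hco : g.coeff (2 * (j:ℕ)) =
        ∑ p : Fin (M+1), v p *
          (if (p:ℕ) ≤ 2*(j:ℕ) then
            (2:ℚ) ^ (2*(j:ℕ) - (p:ℕ)) * (M.choose (2*(j:ℕ) - (p:ℕ)) : ℚ) else 0) := by
      rw [hg, hf, Finset.sum_mul, finset_sum_coeff]
      refine Finset.sum_congr rfl fun p _ => ?_
      rw [mul_comm (C (v p) * X ^ (p:ℕ)) (Pm ^ M), ← mul_assoc, mul_comm (Pm ^ M) (C (v p)),
        mul_assoc, coeff_C_mul, coeff_mul_X_pow']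
      congr 1
      split_ifs with h
      · rw [coeff_Pm_pow]
      · rfl
    have h2 : (2:ℚ) * g.coeff (2 * (j:ℕ)) = 0 := by
      calc (2:ℚ) * g.coeff (2 * (j:ℕ))
          = ∑ p : Fin (M+1),
              (if (p:ℕ) ≤ 2 * (j:ℕ) then
                ((2 ^ (2 * (j:ℕ) + 1 - (p:ℕ)) * Nat.choose M (2 * (j:ℕ) - (p:ℕ)) : ℕ) : ℚ)
              else 0) * v p := by
            rw [hco, Finset.mul_sum]
            refine Finset.sum_congr rfl fun p _ => ?_
            split_ifs with h
            · have he : 2*(j:ℕ) + 1 - (p:ℕ) = (2*(j:ℕ) - (p:ℕ)) + 1 := by omega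
              rw [he]
              push_cast
              ring
            · ring
        _ = 0 := h1
    have := mul_eq_zero.mp h2
    simpa using this
  have heven : ∀ n, Even n → g.coeff n = 0 := by
    intro n hn
    obtain ⟨k, hk⟩ := hn
    by_cases hkM : k ≤ M
    · have := hrow ⟨k, by omega⟩
      simpa [hk, two_mul] using this
    · apply coeff_eq_zero_of_natDegree_lt
      omega
  -- hence g is odd under X ↦ -X
  have hodd : g.comp (-X) = -g := by
    ext n
    rw [coeff_comp_negX, coeff_neg]
    rcases Nat.even_or_odd n with he | ho
    · rw [heven n he, mul_zero, neg_zero]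
    · rw [ho.neg_one_pow, neg_one_mul]
  have hgcomp : f.comp (-X) * Nm ^ M = -(f * Pm ^ M) := by
    have : g.comp (-X) = f.comp (-X) * (Pm.comp (-X)) ^ M := by
      rw [hg, mul_comp, pow_comp]
    rw [Pm_comp] at this
    rw [← this, hodd, hg]
  -- divisibility: Pm^M ∣ f.comp(-X)
  have hdvd : Pm ^ M ∣ f.comp (-X) := by
    have hcop : IsCoprime (Pm ^ M) (Nm ^ M) := coprime_Pm_Nm.pow
    refine hcop.dvd_of_dvd_mul_right ?_
    rw [hgcomp]
    exact dvd_neg.mpr (Dvd.intro_left f rfl)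
  obtain ⟨q, hq⟩ := hdvd
  have hfzero : f = 0 := by
    by_cases hq0 : q = 0
    · rw [hq0, mul_zero] at hq
      have := congrArg (fun p => p.comp (-X)) hq
      simpa [comp_neg_X_comp_neg_X] using this
    · -- q is a constant
      have hdcomp : (f.comp (-X)).natDegree ≤ M := by
        refine le_trans natDegree_comp_le ?_
        rw [natDegree_neg, natDegree_X, mul_one]
        exact hfdeg
      have hdq : q.natDegree = 0 := by
        have hPmM : (Pm ^ M) ≠ 0 := pow_ne_zero _ Pm_ne_zero
        have := natDegree_mul hPmM hq0
        rw [← hq] at this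
        rw [natDegree_pow, natDegree_Pm, mul_one] at this
        omega
      obtain ⟨c, hc⟩ : ∃ c, q = C c := ⟨q.coeff 0, eq_C_of_natDegree_eq_zero hdq⟩
      -- f = Nm^M * C c
      have hfc : f = Nm ^ M * C c := by
        have := congrArg (fun p => p.comp (-X)) hq
        simp only [comp_neg_X_comp_neg_X, mul_comp, pow_comp, C_comp, hc] at this
        rw [Pm_comp] at this
        exact this
      rw [hc] at hq
      -- substitute into the odd relation
      have key : Pm ^ M * C c * Nm ^ M = -(Nm ^ M * C c * Pm ^ M) := by
        rw [← hq, ← hfc]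
        exact hgcomp
      have key2 : (2:ℚ[X]) * (Pm ^ M * Nm ^ M * C c) = 0 := by
        have : Pm ^ M * C c * Nm ^ M + Nm ^ M * C c * Pm ^ M = 0 := by
          rw [key]; ring
        calc (2:ℚ[X]) * (Pm ^ M * Nm ^ M * C c)
            = Pm ^ M * C c * Nm ^ M + Nm ^ M * C c * Pm ^ M := by ring
          _ = 0 := this
      have h2 : (2:ℚ[X]) ≠ 0 := by norm_num
      have hPN : Pm ^ M * Nm ^ M ≠ 0 :=
        mul_ne_zero (pow_ne_zero _ Pm_ne_zero) (pow_ne_zero _ Nm_ne_zero)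
      have hCc : C c = 0 := by
        rcases mul_eq_zero.mp key2 with h | h
        · exact absurd h h2
        · rcases mul_eq_zero.mp h with h' | h'
          · exact absurd h' hPN
          · exact h'
      rw [hfc, hCc, mul_zero]
  funext p
  rw [← hfcoeff p, hfzero]
  simp
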